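/- Let r ≥ 1 and let (v_1,…,v_r) be a system of linear functionals on ℂ[x] such that for every 0 ≤ j ≤ r the moment matrix of V^{[j]} := (v_{j+1},…,v_r, x·v_1,…,x·v_j) admits a Gauss–Borel factorisation, and let (α_n) be as in the bidiagonal factorisation theorem, i.e. α_{(r+1)n} = B^{[r]}_{n,n}/B^{[0]}_{n,n} and α_{(r+1)n+i} = B^{[i−1]}_{n+1,n+1}/B^{[i]}_{n,n}. For 0 ≤ j ≤ r let q^{[j]}_n denote the type I linear forms on the step-line with respect to V^{[j]} with leading coefficients lc(q^{[j]}_n), and let P^{[j]}_n denote the monic type II multiple orthogonal polynomials on the step-line with respect to V^{[j]}, writing p^{[j]}_{n,n−1} for the coefficient of x^{n−1} in P^{[j]}_n (with p^{[r]}_{0,−1} := 0). Then for all n ∈ ℕ: α_{(r+1)n} = lc(q^{[0]}_n)/lc(q^{[r]}_n) = p^{[r]}_{n,n−1} − p^{[0]}_{n+1,n}, and for 1 ≤ i ≤ r: α_{(r+1)n+i} = lc(q^{[i]}_n)/lc(q^{[i−1]}_{n+1}) = p^{[i−1]}_{n+1,n} − p^{[i]}_{n+1,n}. -/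

import Mathlib

open Polynomial Finset

noncomputable section

/-- A linear functional on `ℂ[x]`. -/
abbrev LF := Polynomial ℂ →ₗ[ℂ] ℂ

/-- `x·u` is the functional `p ↦ ⟨u, x p⟩`. -/
def xMul (u : LF) : LF := u.comp (LinearMap.mulLeft ℂ (Polynomial.X : Polynomial ℂ))

/-- The moment matrix of a system of `r` linear functionals (0-indexed). -/
def momentMatrix (r : ℕ) (v : ℕ → LF) (n ℓ : ℕ) : ℂ :=
  v (ℓ % r) (Polynomial.X ^ (ℓ / r + n))

/-- The Darboux-transformed system `V^{[j]} = (v_{j+1},…,v_r, x·v_1,…,x·v_j)`. -/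
def Vsys (r j : ℕ) (v : ℕ → LF) : ℕ → LF :=
  fun i => if j + i < r then v (j + i) else xMul (v (j + i - r))

/-- A Gauss–Borel factorisation `M = A·B` of the moment matrix. -/
structure GaussBorel (r : ℕ) (v : ℕ → LF) (A B : ℕ → ℕ → ℂ) : Prop where
  A_diag : ∀ n, A n n = 1
  A_upper : ∀ n ℓ, n < ℓ → A n ℓ = 0
  B_lower : ∀ n ℓ, ℓ < n → B n ℓ = 0
  B_diag : ∀ n, B n n ≠ 0
  factor : ∀ n ℓ, momentMatrix r v n ℓ = ∑ k ∈ Finset.range (n + 1), A n k * B k ℓ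

/-- The coefficients `α_{(r+1)n} = B^{[r]}_{n,n}/B^{[0]}_{n,n}` and
`α_{(r+1)n+i} = B^{[i-1]}_{n+1,n+1}/B^{[i]}_{n,n}` for `1 ≤ i ≤ r`. -/
def alphaGB (r : ℕ) (B : ℕ → ℕ → ℕ → ℂ) (m : ℕ) : ℂ :=
  if m % (r + 1) = 0 then
    B r (m / (r + 1)) (m / (r + 1)) / B 0 (m / (r + 1)) (m / (r + 1))
  else
    B (m % (r + 1) - 1) (m / (r + 1) + 1) (m / (r + 1) + 1)
      / B (m % (r + 1)) (m / (r + 1)) (m / (r + 1))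

/-- `P` is the sequence of monic type II multiple orthogonal polynomials on
the step-line with respect to the system `v`
(`⟨v_j, x^k P_n⟩ = 0` whenever `n ≥ rk + j`, paper-`j` 1-indexed). -/
def TypeII (r : ℕ) (v : ℕ → LF) (P : ℕ → Polynomial ℂ) : Prop :=
  ∀ n, (P n).Monic ∧ (P n).natDegree = n ∧
    ∀ k j, j < r → r * k + j < n → v j (Polynomial.X ^ k * P n) = 0

/-- `Ap` gives the type I multiple orthogonal polynomials on the step-line:
for `n = r m + k` (`k < r`), `q_n = Σ_{j<r} Ap n j · v_j` with the degree
bounds and the orthogonality/normalisation conditions. -/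
def TypeI (r : ℕ) (v : ℕ → LF) (Ap : ℕ → ℕ → Polynomial ℂ) : Prop :=
  ∀ m k, k < r →
    (∀ j, j ≤ k → (Ap (r * m + k) j).degree ≤ (m : WithBot ℕ)) ∧
    (∀ j, k < j → j < r → (Ap (r * m + k) j).degree < (m : WithBot ℕ)) ∧
    (∀ ℓ, ℓ < r * m + k →
      ∑ j ∈ Finset.range r, v j (Ap (r * m + k) j * Polynomial.X ^ ℓ) = 0) ∧
    (∑ j ∈ Finset.range r, v j (Ap (r * m + k) j * Polynomial.X ^ (r * m + k)) = 1)

/-- The leading coefficient of the type I linear form `q_n`: for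
`n = r m + k` it is the coefficient of `x^m` in `Ap n k`. -/
def lcq (r : ℕ) (Ap : ℕ → ℕ → Polynomial ℂ) (n : ℕ) : ℂ :=
  (Ap n (n % r)).coeff (n / r)



/-- Inverse of a unit lower triangular matrix, row `q`, column `k`. -/
def invA (A : ℕ → ℕ → ℂ) (q k : ℕ) : ℂ :=
  if h : q ≤ k then (if q = k then 1 else 0)
  else -∑ p ∈ (Finset.Ico (k+1) (q+1)).attach, invA A q p.1 * A p.1 k
termination_by q - k
decreasing_by
  obtain ⟨h1, h2⟩ := Finset.mem_Ico.mp p.2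
  omega

lemma invA_self (A : ℕ → ℕ → ℂ) (q : ℕ) : invA A q q = 1 := by
  rw [invA.eq_def]; simp

lemma invA_upper (A : ℕ → ℕ → ℂ) {q k : ℕ} (h : q < k) : invA A q k = 0 := by
  rw [invA.eq_def]; simp [le_of_lt h, Nat.ne_of_lt h]

lemma invA_eq (A : ℕ → ℕ → ℂ) {q k : ℕ} (h : k < q) :
    invA A q k = -∑ p ∈ Finset.Ico (k+1) (q+1), invA A q p * A p k := by
  rw [invA.eq_def]; simp only [dif_neg (not_le.2 h), neg_inj]; exact Finset.sum_attach (Finset.Ico (k+1) (q+1)) (fun p => invA A q p * A p k)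

lemma invA_sub (A : ℕ → ℕ → ℂ) (hAd : ∀ p, A p p = 1) (n : ℕ) :
    invA A (n+1) n = -A (n+1) n := by
  rw [invA_eq A (Nat.lt_succ_self n)]
  have : Finset.Ico (n+1) (n+2) = {n+1} := by
    rw [show n+2 = (n+1)+1 from rfl]; simp
  rw [this, Finset.sum_singleton, invA_self, one_mul]

lemma invA_mul (A : ℕ → ℕ → ℂ) (hAd : ∀ p, A p p = 1)
    (hAu : ∀ p k, p < k → A p k = 0) (q k : ℕ) :
    (∑ p ∈ range (q+1), invA A q p * A p k) = if q = k then 1 else 0 := by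
  rcases lt_trichotomy q k with h | h | h
  · rw [if_neg (Nat.ne_of_lt h)]
    apply Finset.sum_eq_zero
    intro p hp
    have hpq : p < k := by have := Finset.mem_range.mp hp; omega
    rw [hAu p k hpq, mul_zero]
  · subst h
    rw [if_pos rfl, Finset.sum_range_succ, invA_self, hAd, mul_one]
    rw [Finset.sum_eq_zero, zero_add]
    intro p hp
    rw [hAu p q (Finset.mem_range.mp hp), mul_zero]
  · rw [if_neg (by omega)]
    have hsplit : range (q+1) = Finset.Ico 0 k ∪ Finset.Ico k (q+1) := by
      rw [Finset.range_eq_Ico, Finset.Ico_union_Ico_eq_Ico (Nat.zero_le k) (by omega)]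
    rw [hsplit, Finset.sum_union (by
      apply Finset.Ico_disjoint_Ico_consecutive)]
    have h1 : ∑ p ∈ Finset.Ico 0 k, invA A q p * A p k = 0 := by
      apply Finset.sum_eq_zero; intro p hp
      rw [hAu p k (Finset.mem_Ico.mp hp).2, mul_zero]
    rw [h1, zero_add, Finset.sum_eq_sum_Ico_succ_bot (by omega), hAd, mul_one,
      invA_eq A h]
    ring

lemma cancelA (A : ℕ → ℕ → ℂ) (hAd : ∀ p, A p p = 1)
    (hAu : ∀ p k, p < k → A p k = 0) (g : ℕ → ℂ) (q : ℕ) :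
    ∑ p ∈ range (q+1), invA A q p * (∑ k ∈ range (p+1), A p k * g k) = g q := by
  have hext : ∀ p ∈ range (q+1), invA A q p * (∑ k ∈ range (p+1), A p k * g k)
      = ∑ k ∈ range (q+1), invA A q p * (A p k * g k) := by
    intro p hp
    rw [Finset.mul_sum]
    apply Finset.sum_subset
    · exact Finset.range_subset_range.2 (by have := Finset.mem_range.mp hp; omega)
    · intro k _ hk
      rw [hAu p k (by simpa using hk), zero_mul, mul_zero]
  rw [Finset.sum_congr rfl hext, Finset.sum_comm]
  have : ∀ k ∈ range (q+1), ∑ p ∈ range (q+1), invA A q p * (A p k * g k)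
      = (if q = k then 1 else 0) * g k := by
    intro k _
    rw [← invA_mul A hAd hAu q k, Finset.sum_mul]
    congr 1; ext p; ring
  rw [Finset.sum_congr rfl this]
  simp

lemma solveB (B : ℕ → ℕ → ℂ) (hB0 : ∀ k l, l < k → B k l = 0)
    (hBd : ∀ k, B k k ≠ 0) (c : ℕ → ℂ) (n : ℕ)
    (h : ∀ l, l < n → ∑ k ∈ range (n+1), c k * B k l = 0) :
    ∀ l, l < n → c l = 0 := by
  intro l hl
  induction l using Nat.strong_induction_on with
  | _ l IH =>
  have h1 := h l hl
  rw [Finset.sum_eq_single l] at h1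
  · exact (mul_eq_zero.mp h1).resolve_right (hBd l)
  · intro b _ hb
    rcases Nat.lt_or_ge b l with hbl | hbl
    · rw [IH b hbl (by omega), zero_mul]
    · rw [hB0 b l (by omega), mul_zero]
  · intro habs; exact absurd (Finset.mem_range.mpr (by omega)) habs

lemma solveA (A : ℕ → ℕ → ℂ) (hAd : ∀ p, A p p = 1)
    (hAu : ∀ p k, p < k → A p k = 0) (u : ℕ → ℂ) (n : ℕ)
    (h : ∀ l, l ≤ n → ∑ k ∈ range (n+1), A l k * u k = if l = n then 1 else 0) :
    ∀ l, l ≤ n → u l = if l = n then 1 else 0 := by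
  intro l hl
  induction l using Nat.strong_induction_on with
  | _ l IH =>
  have h1 := h l hl
  rw [Finset.sum_eq_single l] at h1
  · rw [hAd, one_mul] at h1; exact h1
  · intro b _ hb
    rcases Nat.lt_or_ge b l with hbl | hbl
    · rw [IH b hbl (by omega), if_neg (by omega), mul_zero]
    · rw [hAu l b (by omega), zero_mul]
  · intro habs; exact absurd (Finset.mem_range.mpr (by omega)) habs


lemma xMul_pow (u : LF) (t : ℕ) : xMul u (X ^ t) = u (X ^ (t+1)) := by
  simp only [xMul, LinearMap.comp_apply, LinearMap.mulLeft_apply]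
  rw [← pow_succ']

lemma Vsys_succ (r j : ℕ) (v : ℕ → LF) (i : ℕ) :
    Vsys r (j+1) v i = Vsys r j v (i+1) := by
  unfold Vsys
  have h1 : j + 1 + i = j + (i + 1) := by ring
  rw [h1]

lemma momshift (r : ℕ) (hr : 1 ≤ r) (j : ℕ) (hj : j < r) (v : ℕ → LF) (p ℓ : ℕ) :
    momentMatrix r (Vsys r (j+1) v) p ℓ = momentMatrix r (Vsys r j v) p (ℓ+1) := by
  unfold momentMatrix
  have hd : r * (ℓ / r) + ℓ % r = ℓ := Nat.div_add_mod ℓ r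
  have hs : ℓ % r < r := Nat.mod_lt ℓ (by omega)
  by_cases hc : ℓ % r + 1 < r
  · have h1 : (ℓ+1) % r = ℓ % r + 1 := by
      conv_lhs => rw [← hd]
      rw [show r * (ℓ/r) + ℓ % r + 1 = r * (ℓ/r) + (ℓ % r + 1) from by ring,
        Nat.mul_add_mod, Nat.mod_eq_of_lt hc]
    have h2 : (ℓ+1) / r = ℓ / r := by
      conv_lhs => rw [← hd]
      rw [show r * (ℓ/r) + ℓ % r + 1 = r * (ℓ/r) + (ℓ % r + 1) from by ring,
        Nat.mul_add_div (by omega), Nat.div_eq_of_lt hc, Nat.add_zero]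
    rw [h1, h2, Vsys_succ]
  · have he : ℓ % r = r - 1 := by omega
    have hl1 : ℓ + 1 = r * (ℓ/r + 1) := by
      have : r * (ℓ/r + 1) = r * (ℓ/r) + r := by ring
      omega
    have h1 : (ℓ+1) % r = 0 := by rw [hl1]; exact Nat.mul_mod_right r _
    have h2 : (ℓ+1) / r = ℓ / r + 1 := by rw [hl1]; exact Nat.mul_div_cancel_left _ (by omega)
    rw [h1, h2]
    have harith : j + 1 + (r - 1) - r = j := by omega
    have hL : Vsys r (j+1) v (ℓ % r) = xMul (v j) := by
      unfold Vsys
      rw [he, if_neg (by omega), harith]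
    have hR : Vsys r j v 0 = v j := by
      unfold Vsys
      rw [if_pos (by omega), Nat.add_zero]
    rw [hL, hR, xMul_pow]
    have : ℓ / r + p + 1 = ℓ / r + 1 + p := by omega
    rw [this]

lemma momshift_r (r : ℕ) (hr : 1 ≤ r) (v : ℕ → LF) (p ℓ : ℕ) :
    momentMatrix r (Vsys r r v) p ℓ = momentMatrix r (Vsys r 0 v) (p+1) ℓ := by
  unfold momentMatrix
  have hs : ℓ % r < r := Nat.mod_lt ℓ (by omega)
  have harith : r + ℓ % r - r = ℓ % r := by omega
  have hL : Vsys r r v (ℓ % r) = xMul (v (ℓ % r)) := by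
    unfold Vsys
    rw [if_neg (by omega), harith]
  have hR : Vsys r 0 v (ℓ % r) = v (ℓ % r) := by
    unfold Vsys
    rw [if_pos (by omega), Nat.zero_add]
  rw [hL, hR, xMul_pow]
  have : ℓ / r + p + 1 = ℓ / r + (p + 1) := by omega
  rw [this]

/-- Generic: if `A'·B'` (column-shifted) equals `A·B` then
`B'_{n+1,n+1} = (A_{n+1,n} - A'_{n+1,n})·B_{n,n}`. -/
lemma bidiag (A' B' A B : ℕ → ℕ → ℂ)
    (hA'd : ∀ p, A' p p = 1) (hA'u : ∀ p k, p < k → A' p k = 0)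
    (hAd : ∀ p, A p p = 1) (hAu : ∀ p k, p < k → A p k = 0)
    (hB'l : ∀ k l, l < k → B' k l = 0)
    (hBl : ∀ k l, l < k → B k l = 0) (hBd : ∀ k, B k k ≠ 0)
    (rel : ∀ p ℓ, ∑ k ∈ range (p+1), A' p k * B' k (ℓ+1)
          = ∑ k ∈ range (p+1), A p k * B k ℓ)
    (n : ℕ) :
    B' (n+1) (n+1) = (A (n+1) n - A' (n+1) n) * B n n := by
  set L : ℕ → ℕ → ℂ := fun q k => ∑ p ∈ range (q+1), invA A' q p * A p k with hL
  have R : ∀ q ℓ, B' q (ℓ+1) = ∑ k ∈ range (q+1), L q k * B k ℓ := by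
    intro q ℓ
    have h0 := cancelA A' hA'd hA'u (fun k => B' k (ℓ+1)) q
    have h1 : ∀ p ∈ range (q+1),
        invA A' q p * (∑ k ∈ range (p+1), A' p k * B' k (ℓ+1))
        = ∑ k ∈ range (q+1), invA A' q p * (A p k * B k ℓ) := by
      intro p hp
      rw [rel p ℓ, Finset.mul_sum]
      apply Finset.sum_subset (Finset.range_subset_range.2 (by
        have := Finset.mem_range.mp hp; omega))
      intro k _ hk
      rw [hAu p k (by simpa using hk), zero_mul, mul_zero]
    rw [← h0, Finset.sum_congr rfl h1, Finset.sum_comm]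
    apply Finset.sum_congr rfl
    intro k _
    rw [hL, Finset.sum_mul]
    apply Finset.sum_congr rfl
    intro p _
    ring
  have hLz : ∀ k, k < n → L (n+1) k = 0 := by
    apply solveB B hBl hBd
    intro l hl
    have h2 := R (n+1) l
    rw [hB'l (n+1) (l+1) (by omega)] at h2
    rw [Finset.sum_range_succ, hBl (n+1) l (by omega), mul_zero, add_zero] at h2
    exact h2.symm
  have h3 := R (n+1) n
  rw [Finset.sum_eq_single n] at h3
  · rw [h3]
    congr 1
    rw [hL]
    simp only
    rw [Finset.sum_range_succ, Finset.sum_range_succ]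
    rw [Finset.sum_eq_zero (by
      intro p hp
      rw [hAu p n (by have := Finset.mem_range.mp hp; omega), mul_zero])]
    rw [invA_self, invA_sub A' hA'd, hAd, one_mul, mul_one, zero_add]
    ring
  · intro b hb hbn
    rcases Nat.lt_or_ge b n with h | h
    · rw [hLz b h, zero_mul]
    · rw [hBl b n (by have := Finset.mem_range.mp hb; omega), mul_zero]
  · intro habs; exact absurd (Finset.mem_range.mpr (by omega)) habs

/-- Generic: if `Ar·Br` equals row-shifted `A0·B0` then
`Br_{n,n} = (A0_{n+1,n} - Ar_{n,n-1})·B0_{n,n}`. -/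
lemma bidiag0 (Ar Br A0 B0 : ℕ → ℕ → ℂ)
    (hArd : ∀ p, Ar p p = 1) (hAru : ∀ p k, p < k → Ar p k = 0)
    (hA0d : ∀ p, A0 p p = 1) (hA0u : ∀ p k, p < k → A0 p k = 0)
    (hBrl : ∀ k l, l < k → Br k l = 0)
    (hB0l : ∀ k l, l < k → B0 k l = 0) (hB0d : ∀ k, B0 k k ≠ 0)
    (rel : ∀ p ℓ, ∑ k ∈ range (p+1), Ar p k * Br k ℓ
          = ∑ k ∈ range (p+2), A0 (p+1) k * B0 k ℓ)
    (n : ℕ) :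
    Br n n = (A0 (n+1) n - (if n = 0 then 0 else Ar n (n-1))) * B0 n n := by
  set N : ℕ → ℕ → ℂ := fun q k => ∑ p ∈ range (q+1), invA Ar q p * A0 (p+1) k with hN
  have R : ∀ q ℓ, Br q ℓ = ∑ k ∈ range (q+2), N q k * B0 k ℓ := by
    intro q ℓ
    have h0 := cancelA Ar hArd hAru (fun k => Br k ℓ) q
    have h1 : ∀ p ∈ range (q+1),
        invA Ar q p * (∑ k ∈ range (p+1), Ar p k * Br k ℓ)
        = ∑ k ∈ range (q+2), invA Ar q p * (A0 (p+1) k * B0 k ℓ) := by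
      intro p hp
      rw [rel p ℓ, Finset.mul_sum]
      apply Finset.sum_subset (Finset.range_subset_range.2 (by
        have := Finset.mem_range.mp hp; omega))
      intro k _ hk
      rw [hA0u (p+1) k (by simp at hk; omega), zero_mul, mul_zero]
    rw [← h0, Finset.sum_congr rfl h1, Finset.sum_comm]
    apply Finset.sum_congr rfl
    intro k _
    rw [hN, Finset.sum_mul]
    apply Finset.sum_congr rfl
    intro p _
    ring
  have hNz : ∀ k, k < n → N n k = 0 := by
    apply solveB B0 hB0l hB0d
    intro l hl
    have h2 := R n l
    rw [hBrl n l (by omega)] at h2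
    rw [show n + 2 = (n+1)+1 from rfl, Finset.sum_range_succ,
      hB0l (n+1) l (by omega), mul_zero, add_zero] at h2
    exact h2.symm
  have h3 := R n n
  rw [Finset.sum_eq_single n] at h3
  · rw [h3]
    congr 1
    rw [hN]
    simp only
    rcases Nat.eq_zero_or_pos n with rfl | hn
    · simp [invA_self]
    · obtain ⟨t, rfl⟩ : ∃ t, n = t + 1 := ⟨n - 1, by omega⟩
      rw [if_neg (by omega)]
      rw [Finset.sum_range_succ, Finset.sum_range_succ]
      rw [Finset.sum_eq_zero (by
        intro p hp
        rw [hA0u (p+1) (t+1) (by have := Finset.mem_range.mp hp; omega), mul_zero])]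
      rw [invA_self, invA_sub Ar hArd, hA0d, one_mul, mul_one, zero_add]
      simp only [Nat.add_sub_cancel]
      ring
  · intro b hb hbn
    rcases Nat.lt_or_ge b n with h | h
    · rw [hNz b h, zero_mul]
    · rw [hB0l b n (by omega), mul_zero]
  · intro habs; exact absurd (Finset.mem_range.mpr (by omega)) habs

/-- expand a functional applied to `X^k * p` into coefficients. -/
lemma lf_expand (w : LF) (p : Polynomial ℂ) (N k : ℕ) (hdeg : p.natDegree < N) :
    w (X ^ k * p) = ∑ m ∈ range N, p.coeff m * w (X ^ (k + m)) := by
  conv_lhs => rw [p.as_sum_range' N hdeg]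
  rw [Finset.mul_sum, map_sum]
  apply Finset.sum_congr rfl
  intro m _
  have h1 : (X:Polynomial ℂ) ^ k * (monomial m (p.coeff m)) = p.coeff m • X ^ (k+m) := by
    rw [Polynomial.smul_X_eq_monomial, X_pow_mul, monomial_mul_X_pow, Nat.add_comm]
  rw [h1, map_smul, smul_eq_mul]

lemma lf_expand' (w : LF) (p : Polynomial ℂ) (N ℓ : ℕ) (hdeg : p.natDegree < N) :
    w (p * X ^ ℓ) = ∑ m ∈ range N, p.coeff m * w (X ^ (m + ℓ)) := by
  rw [show p * X ^ ℓ = X ^ ℓ * p from mul_comm _ _, lf_expand w p N ℓ hdeg]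
  apply Finset.sum_congr rfl
  intro m _
  rw [Nat.add_comm]

/-- Row coefficients of type II polynomials annihilate `A` below the diagonal. -/
lemma coeffP_t (r : ℕ) (hr : 1 ≤ r) (w : ℕ → LF) (A B : ℕ → ℕ → ℂ)
    (hGB : GaussBorel r w A B) (P : ℕ → Polynomial ℂ) (hP : TypeII r w P) (n : ℕ) :
    ∀ s, s < n → ∑ m ∈ range (n+1), (P n).coeff m * A m s = 0 := by
  apply solveB B hGB.B_lower hGB.B_diag
  intro l hl
  have key : ∀ s ∈ range (n+1),
      (∑ m ∈ range (n+1), (P n).coeff m * A m s) * B s l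
      = ∑ m ∈ range (n+1), (P n).coeff m * (A m s * B s l) := by
    intro s _
    rw [Finset.sum_mul]
    apply Finset.sum_congr rfl
    intro m _
    ring
  rw [Finset.sum_congr rfl key, Finset.sum_comm]
  have key2 : ∀ m ∈ range (n+1),
      ∑ s ∈ range (n+1), (P n).coeff m * (A m s * B s l)
      = (P n).coeff m * momentMatrix r w m l := by
    intro m hm
    rw [← Finset.mul_sum, (hGB.factor m l)]
    congr 1
    symm
    apply Finset.sum_subset (Finset.range_subset_range.2 (by
      have := Finset.mem_range.mp hm; omega))
    intro k _ hk
    rw [hGB.A_upper m k (by simpa using hk), zero_mul]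
  rw [Finset.sum_congr rfl key2]
  have hPn := hP n
  have hexp : ∑ m ∈ range (n+1), (P n).coeff m * momentMatrix r w m l
      = w (l % r) (X ^ (l / r) * P n) := by
    rw [lf_expand (w (l % r)) (P n) (n+1) (l / r) (by rw [hPn.2.1]; omega)]
    apply Finset.sum_congr rfl
    intro m _
    rfl
  rw [hexp]
  exact hPn.2.2 (l / r) (l % r) (Nat.mod_lt l (by omega)) (by
    have := Nat.div_add_mod l r; omega)

lemma coeffP_sub (r : ℕ) (hr : 1 ≤ r) (w : ℕ → LF) (A B : ℕ → ℕ → ℂ)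
    (hGB : GaussBorel r w A B) (P : ℕ → Polynomial ℂ) (hP : TypeII r w P) (n : ℕ) :
    (P (n+1)).coeff n = -A (n+1) n := by
  have h := coeffP_t r hr w A B hGB P hP (n+1) n (Nat.lt_succ_self n)
  rw [show n + 1 + 1 = n + 2 from rfl, Finset.sum_range_succ, Finset.sum_range_succ] at h
  rw [Finset.sum_eq_zero (by
    intro m hm
    rw [hGB.A_upper m n (by have := Finset.mem_range.mp hm; omega), mul_zero]), zero_add] at h
  have hmon : (P (n+1)).coeff (n+1) = 1 := by
    have h1 := (hP (n+1)).1
    have hdeg := (hP (n+1)).2.1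
    unfold Polynomial.Monic at h1
    rwa [Polynomial.leadingCoeff, hdeg] at h1
  rw [hGB.A_diag, mul_one, hmon, one_mul] at h
  linear_combination h

lemma sum_grid (r M : ℕ) (f : ℕ → ℂ) :
    ∑ s ∈ range (r * M), f s = ∑ m ∈ range M, ∑ j ∈ range r, f (r * m + j) := by
  induction M with
  | zero => simp
  | succ M IH =>
    rw [Nat.mul_succ, Finset.sum_range_add, IH, Finset.sum_range_succ]

lemma lcq_mul_B (r : ℕ) (hr : 1 ≤ r) (w : ℕ → LF) (A B : ℕ → ℕ → ℂ)
    (hGB : GaussBorel r w A B) (Ap : ℕ → ℕ → Polynomial ℂ)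
    (hAp : TypeI r w Ap) (n : ℕ) :
    B n n * lcq r Ap n = 1 := by
  set M := n / r with hM
  set K := n % r with hK
  have hKr : K < r := Nat.mod_lt n (by omega)
  have hn : r * M + K = n := Nat.div_add_mod n r
  obtain ⟨hdeg1, hdeg2, horth, hnorm⟩ := hAp M K hKr
  rw [hn] at hdeg1 hdeg2 horth hnorm
  set c : ℕ → ℂ := fun s => (Ap n (s % r)).coeff (s / r) with hc
  -- degree bounds in terms of natDegree
  have hnd : ∀ j, j < r → (Ap n j).natDegree ≤ M := by
    intro j hj
    rcases le_or_gt j K with h | h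
    · exact Polynomial.natDegree_le_iff_degree_le.mpr (hdeg1 j h)
    · exact Polynomial.natDegree_le_iff_degree_le.mpr (le_of_lt (hdeg2 j h hj))
  -- step: single-sum form of the orthogonality relations
  have H : ∀ l, l ≤ n →
      ∑ s ∈ range (n+1), c s * momentMatrix r w l s = if l = n then 1 else 0 := by
    intro l hl
    have hstart : ∑ j ∈ range r, w j (Ap n j * X ^ l) = if l = n then 1 else 0 := by
      rcases Nat.lt_or_ge l n with h | h
      · rw [if_neg (by omega)]; exact horth l h
      · have : l = n := by omega
        rw [if_pos this, this]; exact hnorm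
    have hexp : ∀ j ∈ range r, w j (Ap n j * X ^ l)
        = ∑ m ∈ range (M+1), c (r * m + j) * momentMatrix r w l (r * m + j) := by
      intro j hj
      have hjr := Finset.mem_range.mp hj
      rw [lf_expand' (w j) (Ap n j) (M+1) l (by have := hnd j hjr; omega)]
      apply Finset.sum_congr rfl
      intro m _
      have h1 : (r * m + j) % r = j := by
        rw [Nat.mul_add_mod, Nat.mod_eq_of_lt hjr]
      have h2 : (r * m + j) / r = m := by
        rw [Nat.mul_add_div (by omega), Nat.div_eq_of_lt hjr, Nat.add_zero]
      rw [hc]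
      simp only [h1, h2]
      unfold momentMatrix
      rw [h1, h2]
    rw [Finset.sum_congr rfl hexp, Finset.sum_comm] at hstart
    have hgrid := sum_grid r (M+1) (fun s => c s * momentMatrix r w l s)
    have hbig : ∑ s ∈ range (r*(M+1)), c s * momentMatrix r w l s
        = if l = n then 1 else 0 := by rw [hgrid]; exact hstart
    rw [← hbig]
    apply Finset.sum_subset (Finset.range_subset_range.2 (by
      have hrr : r*(M+1) = r*M + r := by ring
      omega))
    intro s hs hs2
    have hs1 := Finset.mem_range.mp hs
    have hsn : n < s := by simpa using hs2
    have hdm : r * (s / r) + s % r = s := Nat.div_add_mod s r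
    have hsl : s / r ≤ M := by
      by_contra hcon
      push_neg at hcon
      have : r * (M + 1) ≤ r * (s / r) := Nat.mul_le_mul_left r hcon
      omega
    have hsr : s / r = M := by
      by_contra hcon
      have h5 : s / r < M := by omega
      have h6 : r * (s / r + 1) ≤ r * M := Nat.mul_le_mul_left r (by omega)
      have h7 : r * (s / r + 1) = r * (s / r) + r := by ring
      have hmod : s % r < r := Nat.mod_lt s (by omega)
      omega
    have hdm2 : r * M + s % r = s := by rw [← hsr]; exact hdm
    have hKs : K < s % r := by omega
    have hmlt : s % r < r := Nat.mod_lt s (by omega)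
    rw [hc]
    simp only [hsr]
    rw [Polynomial.coeff_eq_zero_of_degree_lt (hdeg2 (s % r) hKs hmlt), zero_mul]
  -- transfer through the factorisation
  have H2 : ∀ l, l ≤ n →
      ∑ k ∈ range (n+1), A l k * (∑ s ∈ range (n+1), B k s * c s)
        = if l = n then 1 else 0 := by
    intro l hl
    rw [← H l hl]
    have hfac : ∀ s ∈ range (n+1), c s * momentMatrix r w l s
        = ∑ k ∈ range (n+1), A l k * (B k s * c s) := by
      intro s _
      rw [hGB.factor l s, Finset.mul_sum]
      have hterm : ∀ k, c s * (A l k * B k s) = A l k * (B k s * c s) := by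
        intro k; ring
      rw [Finset.sum_congr rfl (fun k _ => hterm k)]
      apply Finset.sum_subset (Finset.range_subset_range.2 (by omega))
      intro k _ hk
      rw [hGB.A_upper l k (by simpa using hk), zero_mul]
    rw [Finset.sum_congr rfl hfac, Finset.sum_comm]
    apply Finset.sum_congr rfl
    intro k _
    rw [← Finset.mul_sum]
  have hu := solveA A hGB.A_diag hGB.A_upper
    (fun k => ∑ s ∈ range (n+1), B k s * c s) n H2 n (le_refl n)
  rw [if_pos rfl] at hu
  have hfin : ∑ s ∈ range (n+1), B n s * c s = B n n * c n := by
    rw [Finset.sum_eq_single n]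
    · intro b hb hbn
      rw [hGB.B_lower n b (by have := Finset.mem_range.mp hb; omega), zero_mul]
    · intro habs; exact absurd (Finset.mem_range.mpr (by omega)) habs
  rw [hfin] at hu
  have : c n = lcq r Ap n := rfl
  rw [← this]
  exact hu


theorem stmt5 (r : ℕ) (hr : 1 ≤ r) (v : ℕ → LF) (A B : ℕ → ℕ → ℕ → ℂ)
    (hGB : ∀ j, j ≤ r → GaussBorel r (Vsys r j v) (A j) (B j))
    (P : ℕ → ℕ → Polynomial ℂ) (hP : ∀ j, j ≤ r → TypeII r (Vsys r j v) (P j))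
    (Ap : ℕ → ℕ → ℕ → Polynomial ℂ) (hAp : ∀ j, j ≤ r → TypeI r (Vsys r j v) (Ap j)) :
    ∀ n : ℕ,
      (alphaGB r B ((r + 1) * n) = lcq r (Ap 0) n / lcq r (Ap r) n ∧
       alphaGB r B ((r + 1) * n)
          = (if n = 0 then 0 else (P r n).coeff (n - 1)) - (P 0 (n + 1)).coeff n) ∧
      (∀ i, 1 ≤ i → i ≤ r →
        alphaGB r B ((r + 1) * n + i) = lcq r (Ap i) n / lcq r (Ap (i - 1)) (n + 1) ∧
        alphaGB r B ((r + 1) * n + i)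
          = (P (i - 1) (n + 1)).coeff n - (P i (n + 1)).coeff n) := by
  intro n
  constructor
  · have hGB0 := hGB 0 (by omega)
    have hGBr := hGB r le_rfl
    have hmod : ((r+1)*n) % (r+1) = 0 := Nat.mul_mod_right (r+1) n
    have hdiv : ((r+1)*n) / (r+1) = n := Nat.mul_div_cancel_left n (by omega)
    have halpha : alphaGB r B ((r+1)*n) = B r n n / B 0 n n := by
      unfold alphaGB
      rw [hmod, hdiv, if_pos rfl]
    have rel : ∀ p ℓ, ∑ k ∈ range (p+1), A r p k * B r k ℓ
        = ∑ k ∈ range (p+2), A 0 (p+1) k * B 0 k ℓ := by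
      intro p ℓ
      rw [← hGBr.factor p ℓ]
      rw [show p + 2 = (p+1) + 1 from rfl, ← hGB0.factor (p+1) ℓ]
      exact momshift_r r hr v p ℓ
    have hB := bidiag0 (A r) (B r) (A 0) (B 0) hGBr.A_diag hGBr.A_upper
      hGB0.A_diag hGB0.A_upper hGBr.B_lower hGB0.B_lower hGB0.B_diag rel n
    constructor
    · have h0 := lcq_mul_B r hr (Vsys r 0 v) (A 0) (B 0) hGB0 (Ap 0)
        (hAp 0 (by omega)) n
      have hrq := lcq_mul_B r hr (Vsys r r v) (A r) (B r) hGBr (Ap r)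
        (hAp r le_rfl) n
      rw [halpha, eq_inv_of_mul_eq_one_right h0, eq_inv_of_mul_eq_one_right hrq]
      simp [div_eq_mul_inv, inv_inv, mul_comm]
    · rw [halpha, hB, mul_div_cancel_right₀ _ (hGB0.B_diag n)]
      have hc0 : (P 0 (n+1)).coeff n = -A 0 (n+1) n :=
        coeffP_sub r hr (Vsys r 0 v) (A 0) (B 0) hGB0 (P 0) (hP 0 (by omega)) n
      rcases Nat.eq_zero_or_pos n with rfl | hn
      · rw [if_pos rfl, if_pos rfl, hc0]
        ring
      · obtain ⟨t, rfl⟩ : ∃ t, n = t + 1 := ⟨n - 1, by omega⟩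
        have hcr : (P r (t+1)).coeff t = -A r (t+1) t :=
          coeffP_sub r hr (Vsys r r v) (A r) (B r) hGBr (P r) (hP r le_rfl) t
        rw [if_neg (by omega), if_neg (by omega), hc0]
        simp only [Nat.add_sub_cancel]
        rw [hcr]
        ring
  · intro i hi1 hir
    obtain ⟨j, rfl⟩ : ∃ j, i = j + 1 := ⟨i - 1, by omega⟩
    have hjr : j < r := by omega
    have hGBj := hGB j (by omega)
    have hGBj1 := hGB (j+1) (by omega)
    have hmod : ((r+1)*n + (j+1)) % (r+1) = j + 1 := by
      rw [Nat.mul_add_mod, Nat.mod_eq_of_lt (by omega)]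
    have hdiv : ((r+1)*n + (j+1)) / (r+1) = n := by
      rw [Nat.mul_add_div (by omega), Nat.div_eq_of_lt (by omega), Nat.add_zero]
    have halpha : alphaGB r B ((r+1)*n + (j+1)) = B j (n+1) (n+1) / B (j+1) n n := by
      unfold alphaGB
      rw [hmod, hdiv, if_neg (by omega)]
      simp only [Nat.add_sub_cancel]
    have rel : ∀ p ℓ, ∑ k ∈ range (p+1), A j p k * B j k (ℓ+1)
        = ∑ k ∈ range (p+1), A (j+1) p k * B (j+1) k ℓ := by
      intro p ℓ
      rw [← hGBj.factor p (ℓ+1), ← hGBj1.factor p ℓ]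
      exact (momshift r hr j hjr v p ℓ).symm
    have hB := bidiag (A j) (B j) (A (j+1)) (B (j+1)) hGBj.A_diag hGBj.A_upper
      hGBj1.A_diag hGBj1.A_upper hGBj.B_lower hGBj1.B_lower hGBj1.B_diag rel n
    constructor
    · have h0 := lcq_mul_B r hr (Vsys r (j+1) v) (A (j+1)) (B (j+1)) hGBj1
        (Ap (j+1)) (hAp (j+1) (by omega)) n
      have hrq := lcq_mul_B r hr (Vsys r j v) (A j) (B j) hGBj (Ap j)
        (hAp j (by omega)) (n+1)
      simp only [Nat.add_sub_cancel]
      rw [halpha, eq_inv_of_mul_eq_one_right h0, eq_inv_of_mul_eq_one_right hrq]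
      simp [div_eq_mul_inv, inv_inv, mul_comm]
    · simp only [Nat.add_sub_cancel]
      rw [halpha, hB, mul_div_cancel_right₀ _ (hGBj1.B_diag n)]
      have hc0 : (P j (n+1)).coeff n = -A j (n+1) n :=
        coeffP_sub r hr (Vsys r j v) (A j) (B j) hGBj (P j) (hP j (by omega)) n
      have hc1 : (P (j+1) (n+1)).coeff n = -A (j+1) (n+1) n :=
        coeffP_sub r hr (Vsys r (j+1) v) (A (j+1)) (B (j+1)) hGBj1 (P (j+1))
          (hP (j+1) (by omega)) n
      rw [hc0, hc1]
      ring

end
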